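/- Let K be a field, A and B unital associative K-algebras, and χ : A ⊗ B → B ⊗ A a K-linear map satisfying: (i) χ(1⊗b) = b⊗1 and χ(a⊗1) = 1⊗a for all a,b; (ii) χ∘(μ_A⊗id_B) = (id_B⊗μ_A)∘(χ⊗id_A)∘(id_A⊗χ); (iii) χ∘(id_A⊗μ_B) = (μ_B⊗id_A)∘(id_B⊗χ)∘(χ⊗id_B). Then the multiplication μ_χ := (μ_B⊗μ_A)∘(id_B⊗χ⊗id_A) makes B⊗A into an associative unital K-algebra with unit 1⊗1. -/
import Mathlib


open TensorProduct LinearMap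

set_option synthInstance.maxHeartbeats 1000000
set_option maxHeartbeats 3200000

variable (K : Type*)

def IsTwistingMap {A B : Type*} [Field K] [Ring A] [Ring B] [Algebra K A] [Algebra K B]
    (χ : A ⊗[K] B →ₗ[K] B ⊗[K] A) : Prop :=
  (∀ b : B, χ ((1 : A) ⊗ₜ[K] b) = b ⊗ₜ[K] (1 : A)) ∧
  (∀ a : A, χ (a ⊗ₜ[K] (1 : B)) = (1 : B) ⊗ₜ[K] a) ∧
  (∀ (a a' : A) (b : B),
    χ ((a * a') ⊗ₜ[K] b) =
      lTensor B (mul' K A)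
        (TensorProduct.assoc K B A A
          (rTensor A χ
            ((TensorProduct.assoc K A B A).symm (a ⊗ₜ[K] χ (a' ⊗ₜ[K] b)))))) ∧
  (∀ (a : A) (b b' : B),
    χ (a ⊗ₜ[K] (b * b')) =
      rTensor A (mul' K B)
        ((TensorProduct.assoc K B B A).symm
          (lTensor B χ
            (TensorProduct.assoc K B A B (χ (a ⊗ₜ[K] b) ⊗ₜ[K] b')))))

noncomputable def twistMul {A B : Type*} [Field K] [Ring A] [Ring B] [Algebra K A] [Algebra K B]
    (χ : A ⊗[K] B →ₗ[K] B ⊗[K] A) :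
    (B ⊗[K] A) ⊗[K] (B ⊗[K] A) →ₗ[K] B ⊗[K] A :=
  TensorProduct.map (mul' K B) (mul' K A)
    ∘ₗ (TensorProduct.assoc K B B (A ⊗[K] A)).symm.toLinearMap
    ∘ₗ lTensor B (TensorProduct.assoc K B A A).toLinearMap
    ∘ₗ lTensor B (rTensor A χ)
    ∘ₗ lTensor B (TensorProduct.assoc K A B A).symm.toLinearMap
    ∘ₗ (TensorProduct.assoc K B A (B ⊗[K] A)).toLinearMap

section Aux

variable {A B : Type*} [Field K] [Ring A] [Ring B] [Algebra K A] [Algebra K B]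

lemma twistMul_tmul (χ : A ⊗[K] B →ₗ[K] B ⊗[K] A) (b b' : B) (a a' : A) :
    twistMul K χ ((b ⊗ₜ[K] a) ⊗ₜ[K] (b' ⊗ₜ[K] a')) =
      TensorProduct.map (mulLeft K b) (mulRight K a') (χ (a ⊗ₜ[K] b')) := by
  simp only [twistMul, coe_comp, Function.comp_apply, LinearEquiv.coe_coe,
    assoc_tmul, lTensor_tmul, assoc_symm_tmul, rTensor_tmul]
  induction χ (a ⊗ₜ[K] b') with
  | zero => simp
  | tmul c d => simp [mul'_apply]
  | add u v hu hv => simp only [add_tmul, tmul_add, map_add, hu, hv]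

variable (χ : A ⊗[K] B →ₗ[K] B ⊗[K] A)

lemma twistMul_lemA
    (h3 : ∀ (a a' : A) (b : B),
      χ ((a * a') ⊗ₜ[K] b) =
        lTensor B (mul' K A)
          (TensorProduct.assoc K B A A
            (rTensor A χ
              ((TensorProduct.assoc K A B A).symm (a ⊗ₜ[K] χ (a' ⊗ₜ[K] b))))))
    (b1 : B) (a2 : A) (b3 : B) (a3 : A) (t : B ⊗[K] A) :
    twistMul K χ ((TensorProduct.map (mulLeft K b1) (mulRight K a2) t) ⊗ₜ[K] (b3 ⊗ₜ[K] a3)) =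
      TensorProduct.map (mulLeft K b1) (mulRight K a3)
        (twistMul K χ (t ⊗ₜ[K] χ (a2 ⊗ₜ[K] b3))) := by
  induction t with
  | zero => simp
  | add u v hu hv => simp only [map_add, add_tmul, hu, hv]
  | tmul c d =>
    simp only [map_tmul, mulLeft_apply, mulRight_apply, twistMul_tmul, h3 d a2 b3]
    induction χ (a2 ⊗ₜ[K] b3) with
    | zero => simp
    | add u v hu hv => simp only [map_add, tmul_add, hu, hv]
    | tmul e f =>
      simp only [assoc_symm_tmul, rTensor_tmul, twistMul_tmul, LinearEquiv.coe_coe]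
      induction χ (d ⊗ₜ[K] e) with
      | zero => simp
      | add u v hu hv => simp only [map_add, add_tmul, tmul_add, hu, hv]
      | tmul g h =>
        simp [mul'_apply, mul_assoc]

lemma twistMul_lemB
    (h4 : ∀ (a : A) (b b' : B),
      χ (a ⊗ₜ[K] (b * b')) =
        rTensor A (mul' K B)
          ((TensorProduct.assoc K B B A).symm
            (lTensor B χ
              (TensorProduct.assoc K B A B (χ (a ⊗ₜ[K] b) ⊗ₜ[K] b')))))
    (b1 : B) (a1 : A) (b2 : B) (a3 : A) (s : B ⊗[K] A) :
    twistMul K χ ((b1 ⊗ₜ[K] a1) ⊗ₜ[K] (TensorProduct.map (mulLeft K b2) (mulRight K a3) s)) =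
      TensorProduct.map (mulLeft K b1) (mulRight K a3)
        (twistMul K χ (χ (a1 ⊗ₜ[K] b2) ⊗ₜ[K] s)) := by
  induction s with
  | zero => simp
  | add u v hu hv => simp only [map_add, tmul_add, hu, hv]
  | tmul e f =>
    simp only [map_tmul, mulLeft_apply, mulRight_apply, twistMul_tmul, h4 a1 b2 e]
    induction χ (a1 ⊗ₜ[K] b2) with
    | zero => simp
    | add u v hu hv => simp only [map_add, tmul_add, add_tmul, hu, hv]
    | tmul c d =>
      simp only [assoc_tmul, lTensor_tmul, twistMul_tmul, LinearEquiv.coe_coe]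
      induction χ (d ⊗ₜ[K] e) with
      | zero => simp
      | add u v hu hv => simp only [map_add, add_tmul, tmul_add, hu, hv]
      | tmul g h =>
        simp [mul'_apply, mul_assoc]

end Aux

theorem twistMul_assoc_one {A B : Type*} [Field K] [Ring A] [Ring B] [Algebra K A] [Algebra K B]
    (χ : A ⊗[K] B →ₗ[K] B ⊗[K] A) (hχ : IsTwistingMap K χ) :
    (∀ x y z : B ⊗[K] A,
        twistMul K χ (twistMul K χ (x ⊗ₜ[K] y) ⊗ₜ[K] z) =
          twistMul K χ (x ⊗ₜ[K] twistMul K χ (y ⊗ₜ[K] z))) ∧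
    (∀ x : B ⊗[K] A, twistMul K χ (((1 : B) ⊗ₜ[K] (1 : A)) ⊗ₜ[K] x) = x) ∧
    (∀ x : B ⊗[K] A, twistMul K χ (x ⊗ₜ[K] ((1 : B) ⊗ₜ[K] (1 : A))) = x) := by
  obtain ⟨h1, h2, h3, h4⟩ := hχ
  refine ⟨?_, ?_, ?_⟩
  · intro x y z
    induction x with
    | zero => simp
    | add u v hu hv => simp only [add_tmul, map_add, hu, hv]
    | tmul b1 a1 =>
      induction y with
      | zero => simp
      | add u v hu hv => simp only [add_tmul, tmul_add, map_add, hu, hv]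
      | tmul b2 a2 =>
        induction z with
        | zero => simp
        | add u v hu hv => simp only [add_tmul, tmul_add, map_add, hu, hv]
        | tmul b3 a3 =>
          rw [twistMul_tmul K χ b1 b2 a1 a2, twistMul_tmul K χ b2 b3 a2 a3,
            twistMul_lemA K χ h3 b1 a2 b3 a3, twistMul_lemB K χ h4 b1 a1 b2 a3]
  · intro x
    induction x with
    | zero => simp
    | add u v hu hv => simp only [tmul_add, map_add, hu, hv]
    | tmul b a => simp [twistMul_tmul, h1]
  · intro x
    induction x with
    | zero => simp
    | add u v hu hv => simp only [add_tmul, map_add, hu, hv]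
    | tmul b a => simp [twistMul_tmul, h2]
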